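/- Let B(U,V) be the complete bipartite graph with parts U and V, where |U| = a ≥ 2 and |V| = b ≥ 2. Then for any subsets U' ⊆ U with |U'| = a − 1 and V' ⊆ V with |V'| = b − 1, the set M = U' ∪ V' is a well-connected set of B(U,V), of size a + b − 2. -/
import Mathlib


/-- A set `M` of vertices of `G` is *well-connected* if (i) any two distinct
vertices of `M` are joined by a path in `G` avoiding all other vertices of `M`,
and (ii) the subgraph induced by the complement of `M` is connected
(the empty induced subgraph being regarded as connected). -/
def IsWCS {V : Type*} (G : SimpleGraph V) (M : Set V) : Prop :=
  (∀ u ∈ M, ∀ v ∈ M, u ≠ v →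
    ∃ p : G.Walk u v, ∀ w ∈ p.support, w ∈ M → w = u ∨ w = v) ∧
  (G.induce Mᶜ).Preconnected

theorem complete_bipartite_wcs {α β : Type*} [Fintype α] [Fintype β]
    (ha : 2 ≤ Fintype.card α) (hb : 2 ≤ Fintype.card β)
    (U' : Set α) (W' : Set β)
    (hU' : Nat.card U' = Fintype.card α - 1) (hW' : Nat.card W' = Fintype.card β - 1) :
    IsWCS (completeBipartiteGraph α β) (Sum.inl '' U' ∪ Sum.inr '' W') ∧
    Nat.card (Sum.inl '' U' ∪ Sum.inr '' W' : Set (α ⊕ β)) =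
      Fintype.card α + Fintype.card β - 2 := by
  rw [Nat.card_coe_set_eq] at hU' hW'
  have hUc : U'ᶜ.ncard = 1 := by
    have := U'.ncard_add_ncard_compl
    rw [Nat.card_eq_fintype_card] at this
    omega
  have hWc : W'ᶜ.ncard = 1 := by
    have := W'.ncard_add_ncard_compl
    rw [Nat.card_eq_fintype_card] at this
    omega
  obtain ⟨a0, ha0⟩ := Set.ncard_eq_one.mp hUc
  obtain ⟨b0, hb0⟩ := Set.ncard_eq_one.mp hWc
  have ha0' : a0 ∉ U' := by
    have : a0 ∈ U'ᶜ := ha0 ▸ rfl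
    exact this
  have hb0' : b0 ∉ W' := by
    have : b0 ∈ W'ᶜ := hb0 ▸ rfl
    exact this
  set M : Set (α ⊕ β) := Sum.inl '' U' ∪ Sum.inr '' W' with hM
  have hMa : ∀ x : α, Sum.inl x ∈ M ↔ x ∈ U' := by
    intro x; simp [hM]
  have hMb : ∀ y : β, Sum.inr y ∈ M ↔ y ∈ W' := by
    intro y; simp [hM]
  have adjlr : ∀ (x : α) (y : β), (completeBipartiteGraph α β).Adj (Sum.inl x) (Sum.inr y) := by
    intro x y; simp
  refine ⟨⟨?_, ?_⟩, ?_⟩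
  · rintro u hu v hv huv
    match u, v with
    | Sum.inl x, Sum.inl x' =>
      refine ⟨.cons (adjlr x b0) (.cons (adjlr x' b0).symm .nil), ?_⟩
      intro w hw hwM
      simp [SimpleGraph.Walk.support] at hw
      rcases hw with h | h | h
      · exact Or.inl h
      · exact absurd ((hMb b0).mp (h ▸ hwM)) hb0'
      · exact Or.inr h
    | Sum.inl x, Sum.inr y =>
      refine ⟨.cons (adjlr x y) .nil, ?_⟩
      intro w hw hwM
      simp [SimpleGraph.Walk.support] at hw
      tauto
    | Sum.inr y, Sum.inl x =>
      refine ⟨.cons (adjlr x y).symm .nil, ?_⟩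
      intro w hw hwM
      simp [SimpleGraph.Walk.support] at hw
      tauto
    | Sum.inr y, Sum.inr y' =>
      refine ⟨.cons (adjlr a0 y).symm (.cons (adjlr a0 y') .nil), ?_⟩
      intro w hw hwM
      simp [SimpleGraph.Walk.support] at hw
      rcases hw with h | h | h
      · exact Or.inl h
      · exact absurd ((hMa a0).mp (h ▸ hwM)) ha0'
      · exact Or.inr h
  · rintro ⟨u, hu⟩ ⟨v, hv⟩
    match u, v with
    | Sum.inl x, Sum.inl x' =>
      have hx : x = a0 := by
        have : x ∈ U'ᶜ := fun h => hu (Or.inl ⟨x, h, rfl⟩)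
        rw [ha0] at this; exact this
      have hx' : x' = a0 := by
        have : x' ∈ U'ᶜ := fun h => hv (Or.inl ⟨x', h, rfl⟩)
        rw [ha0] at this; exact this
      subst hx; subst hx'
      rfl
    | Sum.inl x, Sum.inr y =>
      exact SimpleGraph.Adj.reachable (by simp [SimpleGraph.comap_adj])
    | Sum.inr y, Sum.inl x =>
      exact SimpleGraph.Adj.reachable (by simp [SimpleGraph.comap_adj])
    | Sum.inr y, Sum.inr y' =>
      have hy : y = b0 := by
        have : y ∈ W'ᶜ := fun h => hu (Or.inr ⟨y, h, rfl⟩)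
        rw [hb0] at this; exact this
      have hy' : y' = b0 := by
        have : y' ∈ W'ᶜ := fun h => hv (Or.inr ⟨y', h, rfl⟩)
        rw [hb0] at this; exact this
      subst hy; subst hy'
      rfl
  · have hdisj : Disjoint (Sum.inl '' U' : Set (α ⊕ β)) (Sum.inr '' W') :=
      Set.disjoint_left.mpr (by rintro _ ⟨x, _, rfl⟩ ⟨y, _, h⟩; exact Sum.inl_ne_inr h.symm)
    rw [Nat.card_coe_set_eq, Set.ncard_union_eq hdisj (Set.toFinite _) (Set.toFinite _),
      Set.ncard_image_of_injective _ Sum.inl_injective,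
      Set.ncard_image_of_injective _ Sum.inr_injective, hU', hW']
    omega
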